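/- Let K be a number field containing a CM subfield. Then for any nonzero α ∈ K, the set {x ∈ K : |ι(x)| = |ι(α)| for all embeddings ι : K → ℂ} is infinite. -/

import Mathlib

set_option maxHeartbeats 1000000
set_option synthInstance.maxHeartbeats 1000000
open NumberField Complex Polynomial Module

/-- A field `L` is a CM field if it is totally imaginary (no real embeddings)
and a quadratic extension of a totally real subfield. -/
def IsCMField (L : Type*) [Field L] : Prop :=
  (∀ φ : L →+* ℂ, ¬ NumberField.ComplexEmbedding.IsReal φ) ∧
    ∃ F : Subfield L, (∀ ψ : F →+* ℂ, NumberField.ComplexEmbedding.IsReal ψ) ∧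
      Module.finrank F L = 2

/-- There is a "totally imaginary" element: nonzero purely imaginary in every embedding. -/
lemma exists_tot_imag (K : Type*) [Field K] [NumberField K]
    (hCM : ∃ L : Subfield K, _root_.IsCMField L) :
    ∃ γ : K, ∀ ι : K →+* ℂ, (ι γ).re = 0 ∧ ι γ ≠ 0 := by
  obtain ⟨L, hTI, F, hF, hrank⟩ := hCM
  haveI : FiniteDimensional F L := FiniteDimensional.of_finrank_eq_succ hrank
  haveI : CharZero L := SubsemiringClass.instCharZero L
  -- there is an element not in `F`
  obtain ⟨β, hβ⟩ : ∃ β : L, β ∉ Set.range (algebraMap F L) := by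
    by_contra h
    push_neg at h
    have hsurj : Function.Surjective (Algebra.linearMap F L) := fun x => h x
    have h1 : finrank F L ≤ finrank F F := by
      have := LinearMap.finrank_range_le (Algebra.linearMap F L)
      rwa [LinearMap.range_eq_top.mpr hsurj, finrank_top] at this
    rw [hrank, finrank_self] at h1
    omega
  have hint : IsIntegral F β := IsIntegral.of_finite F β
  have hmonic := minpoly.monic hint
  -- the minimal polynomial of β has degree 2
  have hdeg : (minpoly F β).natDegree = 2 := by
    have hle : (minpoly F β).natDegree ≤ 2 := hrank ▸ minpoly.natDegree_le β
    have hpos : 0 < (minpoly F β).natDegree := minpoly.natDegree_pos hint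
    have hne1 : (minpoly F β).natDegree ≠ 1 := by
      intro h1
      have := minpoly.aeval F β
      rw [hmonic.eq_X_add_C h1] at this
      simp only [map_add, aeval_X, aeval_C] at this
      exact hβ ⟨-((minpoly F β).coeff 0), by rw [map_neg]; linear_combination -this⟩
    omega
  set c0 := (minpoly F β).coeff 0 with hc0
  set c1 := (minpoly F β).coeff 1 with hc1
  have hquad : algebraMap F L c0 + algebraMap F L c1 * β + β ^ 2 = 0 := by
    have := minpoly.aeval F β
    rw [aeval_eq_sum_range, hdeg] at this
    rw [Finset.sum_range_succ, Finset.sum_range_succ, Finset.sum_range_one] at this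
    have h2 : (minpoly F β).coeff 2 = 1 := by
      have := hmonic.coeff_natDegree
      rwa [hdeg] at this
    rw [h2] at this
    simpa [Algebra.smul_def] using this
  set γL : L := 2 * β + algebraMap F L c1 with hγL
  set d : F := c1 ^ 2 - 4 * c0 with hd
  have hγsq : γL ^ 2 = algebraMap F L d := by
    rw [hd, map_sub, map_pow, map_mul, map_ofNat]
    linear_combination (4 : L) * hquad
  have hγF : γL ∉ Set.range (algebraMap F L) := by
    rintro ⟨g, hg⟩
    refine hβ ⟨(g - c1) / 2, ?_⟩
    rw [map_div₀, map_sub, map_ofNat]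
    rw [hγL] at hg
    field_simp
    linear_combination hg
  have hγ0 : γL ≠ 0 := fun h => hγF ⟨0, by rw [map_zero, h]⟩
  -- 1, γL span L over F
  have hindep : LinearIndependent F ![(1 : L), γL] := by
    rw [LinearIndependent.pair_iff]
    intro s t hst
    rcases eq_or_ne t 0 with ht | ht
    · subst ht
      simp only [zero_smul, add_zero] at hst
      have h1 : algebraMap F L s = 0 := by simpa [Algebra.smul_def] using hst
      have : s = 0 := (algebraMap F L).injective (by rw [h1, map_zero])
      exact ⟨this, rfl⟩
    · exfalso
      refine hγF ⟨-s / t, ?_⟩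
      rw [map_div₀, map_neg]
      have hst' : algebraMap F L s + algebraMap F L t * γL = 0 := by
        simpa [Algebra.smul_def] using hst
      have htL : algebraMap F L t ≠ 0 := fun h => ht ((algebraMap F L).injective (by simp [h]))
      field_simp
      linear_combination -hst'
  have hspan : Submodule.span F {(1 : L), γL} = ⊤ := by
    apply Submodule.eq_top_of_finrank_eq
    have hset : Set.range ![(1 : L), γL] = {(1 : L), γL} := by
      ext x
      simp [Matrix.range_cons, Matrix.range_empty]
      tauto
    rw [← hset, finrank_span_eq_card hindep, hrank]
    simp
  have hrep : ∀ x : L, ∃ f g : F, f • (1 : L) + g • γL = x := by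
    intro x
    have : x ∈ Submodule.span F {(1 : L), γL} := hspan ▸ Submodule.mem_top
    exact Submodule.mem_span_pair.mp this
  refine ⟨L.subtype γL, fun ι => ?_⟩
  set φ : L →+* ℂ := ι.comp L.subtype with hφ
  set z : ℂ := φ γL with hz
  have hψ : ∀ f : F, (starRingEnd ℂ) (φ (algebraMap F L f)) = φ (algebraMap F L f) := by
    intro f
    have := hF (φ.comp (algebraMap F L))
    rw [ComplexEmbedding.isReal_iff] at this
    exact RingHom.congr_fun this f
  have hzsqim : (z ^ 2).im = 0 := by
    have h1 : z ^ 2 = φ (algebraMap F L d) := by rw [hz, ← map_pow, hγsq]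
    rw [h1]
    exact Complex.conj_eq_iff_im.mp (hψ d)
  have hreim : z.re * z.im = 0 := by
    have : (z ^ 2).im = 2 * (z.re * z.im) := by
      rw [sq, Complex.mul_im]; ring
    rw [this] at hzsqim; linarith
  have him : z.im ≠ 0 := by
    intro h0
    apply hTI φ
    rw [ComplexEmbedding.isReal_iff]
    ext x
    rw [ComplexEmbedding.conjugate_coe_eq]
    obtain ⟨f, g, hfg⟩ := hrep x
    rw [← hfg]
    have hzr : (starRingEnd ℂ) z = z := Complex.conj_eq_iff_im.mpr h0
    simp only [Algebra.smul_def, mul_one, map_add, map_mul, hψ, hzr, ← hz]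
  refine ⟨?_, ?_⟩
  · have : ι (L.subtype γL) = z := rfl
    rw [this]
    rcases mul_eq_zero.mp hreim with h | h
    · exact h
    · exact absurd h him
  · intro h
    apply him
    have : ι (L.subtype γL) = z := rfl
    rw [this] at h
    rw [h]
    simp

/-- Let `K` be a number field containing a CM subfield.  Then for any nonzero `α ∈ K`,
the set `{x ∈ K : |ι x| = |ι α| for all embeddings ι : K → ℂ}` is infinite. -/
theorem stmt_3 (K : Type*) [Field K] [NumberField K]
    (hCM : ∃ L : Subfield K, _root_.IsCMField L) (α : K) (hα : α ≠ 0) :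
    {x : K | ∀ ι : K →+* ℂ, ‖ι x‖ = ‖ι α‖}.Infinite := by
  obtain ⟨γ, hγ⟩ := exists_tot_imag K hCM
  haveI : Nonempty (K →+* ℂ) := by
    obtain ⟨w⟩ := (inferInstance : Nonempty (NumberField.InfinitePlace K))
    exact ⟨w.embedding⟩
  obtain ⟨ι₀⟩ := (inferInstance : Nonempty (K →+* ℂ))
  have hγ0 : γ ≠ 0 := fun h => (hγ ι₀).2 (by rw [h, map_zero])
  have hsub : ∀ t : ℚ, (t : K) * γ - 1 ≠ 0 := by
    intro t h
    have h2 : ι₀ ((t : K) * γ - 1) = 0 := by rw [h, map_zero]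
    rw [map_sub, map_mul, map_ratCast, map_one] at h2
    have h3 : ((t : ℂ) * ι₀ γ - 1).re = 0 := by rw [h2]; rfl
    simp [Complex.sub_re, Complex.mul_re, (hγ ι₀).1] at h3
  apply Set.infinite_of_injective_forall_mem
    (f := fun t : ℚ => α * (((t : K) * γ + 1) * ((t : K) * γ - 1)⁻¹))
  · intro t1 t2 h
    simp only at h
    have h' := mul_left_cancel₀ hα h
    rw [← div_eq_mul_inv, ← div_eq_mul_inv, div_eq_div_iff (hsub t1) (hsub t2)] at h'
    · have : ((t1 : K) - t2) * (2 * γ) = 0 := by linear_combination -h'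
      rcases mul_eq_zero.mp this with h1 | h1
      · have : (t1 : K) = t2 := by linear_combination h1
        exact_mod_cast this
      · exfalso
        apply hγ0
        have h2 : (2 : K) ≠ 0 := two_ne_zero
        rcases mul_eq_zero.mp h1 with h3 | h3
        · exact absurd h3 h2
        · exact h3
  · intro t ι
    simp only [Set.mem_setOf_eq, map_mul, map_inv₀, map_add, map_sub, map_one, map_ratCast, norm_mul, norm_inv]
    set z : ℂ := ι γ with hz
    have hre : z.re = 0 := (hγ ι).1
    have habs : ‖(t : ℂ) * z + 1‖ = ‖(t : ℂ) * z - 1‖ := by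
      rw [Complex.norm_def, Complex.norm_def]
      congr 1
      simp [Complex.normSq_apply, Complex.add_re, Complex.sub_re, Complex.mul_re,
        Complex.mul_im, hre]
    have hne : ‖(t : ℂ) * z - 1‖ ≠ 0 := by
      rw [ne_eq, norm_eq_zero]
      intro h
      have : ((t : ℂ) * z - 1).re = 0 := by rw [h]; rfl
      simp [Complex.sub_re, Complex.mul_re, hre] at this
    rw [habs, mul_inv_cancel₀ hne, mul_one]
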